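/- Let u be twice continuously differentiable in x on an open subset of ℝ³×(0,∞) (or of ℝ³), and let P be a point where ∇_ℍu(P) ≠ 0. Then at P the following pointwise identity holds: |Hu|² − ⟨(Hu)²ν,ν⟩ = |∇_ℍu|²·[h² + (p + ⟨Hu v, ν⟩/|∇_ℍu|)²]. -/

import Mathlib

noncomputable section
open MeasureTheory Real Filter Set

/-- Points of the half-space `ℝ³ × ℝ` (the last coordinate is `y`). -/
abbrev Pt : Type := (Fin 3 → ℝ) × ℝ

/-- Partial derivative in the i-th horizontal direction. -/
def pdx (i : Fin 3) (u : Pt → ℝ) (p : Pt) : ℝ := fderiv ℝ u p (Pi.single i 1, 0)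

/-- Partial derivative in the `y` direction. -/
def pdy (u : Pt → ℝ) (p : Pt) : ℝ := fderiv ℝ u p (0, 1)

/-- Heisenberg vector field `X = ∂₁ + 2x₂∂₃`. -/
def Xd (u : Pt → ℝ) (p : Pt) : ℝ := pdx 0 u p + 2 * p.1 1 * pdx 2 u p

/-- Heisenberg vector field `Y = ∂₂ − 2x₁∂₃`. -/
def Yd (u : Pt → ℝ) (p : Pt) : ℝ := pdx 1 u p - 2 * p.1 0 * pdx 2 u p

/-- Heisenberg vector field `T = −4∂₃`. -/
def Td (u : Pt → ℝ) (p : Pt) : ℝ := -4 * pdx 2 u p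

/-- `|∇_ℍ u|²`. -/
def normH2 (u : Pt → ℝ) (p : Pt) : ℝ := (Xd u p) ^ 2 + (Yd u p) ^ 2

/-- `|∇_ℍ u|`. -/
def nH (u : Pt → ℝ) (p : Pt) : ℝ := Real.sqrt (normH2 u p)

/-- `|∇⁺ u|² = (Xu)² + (Yu)² + (∂_y u)²`. -/
def gradSq (u : Pt → ℝ) (p : Pt) : ℝ := (Xd u p) ^ 2 + (Yd u p) ^ 2 + (pdy u p) ^ 2

/-- `⟨∇⁺u, ∇⁺w⟩`. -/
def gradInner (u w : Pt → ℝ) (p : Pt) : ℝ :=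
  Xd u p * Xd w p + Yd u p * Yd w p + pdy u p * pdy w p

/-- The open upper half-space `ℝ³ × (0,∞)`. -/
def Hplus : Set Pt := {p | 0 < p.2}

/-- Euclidean ball of radius `R` (centered at the origin) in `ℝ⁴ ≃ Pt`. -/
def eBall (R : ℝ) : Set Pt := {p | (p.1 0) ^ 2 + (p.1 1) ^ 2 + (p.1 2) ^ 2 + p.2 ^ 2 < R ^ 2}

/-- Admissible test function: bounded, locally Lipschitz on `ℝ³×[0,∞)`, vanishing
outside some ball, with finite weighted energy. -/
def IsAdmissible (a : ℝ) (ξ : Pt → ℝ) : Prop :=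
  (∃ M, ∀ p : Pt, 0 ≤ p.2 → |ξ p| ≤ M) ∧
  (∀ p : Pt, 0 ≤ p.2 → ∃ K : NNReal, ∃ t ∈ nhdsWithin p {q : Pt | 0 ≤ q.2},
    LipschitzOnWith K ξ t) ∧
  (∃ R > 0, (∀ p : Pt, 0 ≤ p.2 → p ∉ eBall R → ξ p = 0) ∧
    IntegrableOn (fun p => p.2 ^ a * gradSq ξ p) (eBall R ∩ Hplus) volume)

/-- Bounded weak solution of `div(y^a ∇⁺u)=0` in `ℝ³×(0,∞)`, `−y^a u_y = f(u)` on `ℝ³×{0}`. -/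
def IsWeakSolution (a : ℝ) (f : ℝ → ℝ) (u : Pt → ℝ) : Prop :=
  (∃ M, ∀ p : Pt, 0 ≤ p.2 → |u p| ≤ M) ∧
  ContinuousOn u {p : Pt | 0 ≤ p.2} ∧
  (∀ R > 0, IntegrableOn (fun p => p.2 ^ a * gradSq u p) (eBall R ∩ Hplus) volume) ∧
  (∀ ξ : Pt → ℝ, IsAdmissible a ξ →
    (∫ p in Hplus, p.2 ^ a * gradInner u ξ p)
      = ∫ x : Fin 3 → ℝ, f (u (x, 0)) * ξ (x, 0))

/-- Stability: nonnegativity of the second variation. -/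
def IsStable (a : ℝ) (f : ℝ → ℝ) (u : Pt → ℝ) : Prop :=
  ∀ ξ : Pt → ℝ, IsAdmissible a ξ →
    0 ≤ (∫ p in Hplus, p.2 ^ a * gradSq ξ p)
        - ∫ x : Fin 3 → ℝ, deriv f (u (x, 0)) * ξ (x, 0) ^ 2

/-- `f ∈ C^{1,γ}(ℝ)`. -/
def C1Holder (γ : ℝ) (f : ℝ → ℝ) : Prop :=
  Differentiable ℝ f ∧ ∃ C > 0, ∀ s t : ℝ, |deriv f s - deriv f t| ≤ C * |s - t| ^ γ

/-- `|∇_ℍ u| ∈ L^∞(closure(B_R⁺))` for every `R > 0`. -/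
def GradBound (u : Pt → ℝ) : Prop :=
  ∀ R > 0, ∃ M, ∀ p ∈ closure (eBall R ∩ Hplus), nH u p ≤ M

/-- First component of the intrinsic normal `ν = ∇_ℍu/|∇_ℍu|`. -/
def nu1 (u : Pt → ℝ) (p : Pt) : ℝ := Xd u p / nH u p

/-- Second component of the intrinsic normal. -/
def nu2 (u : Pt → ℝ) (p : Pt) : ℝ := Yd u p / nH u p

/-- First component of the intrinsic unit tangent `v = (Yu,−Xu)/|∇_ℍu|`. -/
def tv1 (u : Pt → ℝ) (p : Pt) : ℝ := Yd u p / nH u p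

/-- Second component of the intrinsic unit tangent. -/
def tv2 (u : Pt → ℝ) (p : Pt) : ℝ := -(Xd u p) / nH u p

/-- `|Hu|²`, the squared norm of the horizontal Hessian
`Hu = [[XXu, YXu],[XYu, YYu]]`. -/
def normHess2 (u : Pt → ℝ) (p : Pt) : ℝ :=
  (Xd (Xd u) p) ^ 2 + (Yd (Xd u) p) ^ 2 + (Xd (Yd u) p) ^ 2 + (Yd (Yd u) p) ^ 2

/-- `⟨(Hu)²ν,ν⟩ = |Huᵀν|²`, where `(Hu)² = Hu(Hu)ᵀ`. -/
def hessQ (u : Pt → ℝ) (p : Pt) : ℝ :=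
  (Xd (Xd u) p * nu1 u p + Xd (Yd u) p * nu2 u p) ^ 2
  + (Yd (Xd u) p * nu1 u p + Yd (Yd u) p * nu2 u p) ^ 2

/-- `⟨Hu v, ν⟩`. -/
def huvnu (u : Pt → ℝ) (p : Pt) : ℝ :=
  (Xd (Xd u) p * tv1 u p + Yd (Xd u) p * tv2 u p) * nu1 u p
  + (Xd (Yd u) p * tv1 u p + Yd (Yd u) p * tv2 u p) * nu2 u p

/-- Intrinsic mean curvature `h = X(Xu/|∇_ℍu|) + Y(Yu/|∇_ℍu|)`. -/
def curvh (u : Pt → ℝ) (p : Pt) : ℝ :=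
  Xd (fun q => Xd u q / nH u q) p + Yd (fun q => Yd u q / nH u q) p

/-- Imaginary curvature `p = −Tu/|∇_ℍu|`. -/
def curvp (u : Pt → ℝ) (p : Pt) : ℝ := - Td u p / nH u p

/-- `⟨Tν, v⟩ = T(ν₁)v₁ + T(ν₂)v₂`. -/
def tnuv (u : Pt → ℝ) (p : Pt) : ℝ :=
  Td (fun q => nu1 u q) p * tv1 u p + Td (fun q => nu2 u q) p * tv2 u p

/-- `𝓡⁺ = {(x,y) ∈ ℝ³×(0,∞) : ∇_ℍu(x,y) ≠ 0}`. -/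
def Rplus (u : Pt → ℝ) : Set Pt := {p | 0 < p.2 ∧ normH2 u p ≠ 0}

/-- The Heisenberg gauge norm `|x|_ℍ = ((x₁²+x₂²)² + x₃²)^{1/4}` on `ℝ³`. -/
def hnorm (x : Fin 3 → ℝ) : ℝ := (((x 0) ^ 2 + (x 1) ^ 2) ^ 2 + (x 2) ^ 2) ^ ((1 : ℝ) / 4)

/-- The gauge norm `|Z| = (|x|_ℍ² + y²)^{1/2}` on `ℝ³×(0,∞)`. -/
def gnorm (p : Pt) : ℝ := Real.sqrt ((hnorm p.1) ^ 2 + p.2 ^ 2)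

/-- Gauge ball `B(0,τ)` in the upper half-space. -/
def gBall (τ : ℝ) : Set Pt := {p | 0 < p.2 ∧ gnorm p < τ}

/-- Gauge semi-annulus `A_{r,R}`. -/
def gAnn (r R : ℝ) : Set Pt := {p | 0 < p.2 ∧ r ≤ gnorm p ∧ gnorm p ≤ R}

/-- The weighted energy `η(τ)`. -/
def eta (a : ℝ) (u : Pt → ℝ) (τ : ℝ) : ℝ :=
  ∫ p in gBall τ, 4 * p.2 ^ a * normH2 u p * ((p.1 0) ^ 2 + (p.1 1) ^ 2 + p.2 ^ 2)

/-! ### Auxiliary material for the proof -/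

/-- The horizontal vector `X` at `P`, viewed as an element of `Pt`. -/
private def vvX (P : Pt) : Pt :=
  ((Pi.single 0 1 : Fin 3 → ℝ), (0:ℝ)) + (2 * P.1 1) • ((Pi.single 2 1 : Fin 3 → ℝ), (0:ℝ))

/-- The horizontal vector `Y` at `P`, viewed as an element of `Pt`. -/
private def vvY (P : Pt) : Pt :=
  ((Pi.single 1 1 : Fin 3 → ℝ), (0:ℝ)) - (2 * P.1 0) • ((Pi.single 2 1 : Fin 3 → ℝ), (0:ℝ))

private lemma vvX_c0 (P : Pt) : (vvX P).1 0 = 1 := by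
  simp [vvX, Pi.single_apply]

private lemma vvX_c1 (P : Pt) : (vvX P).1 1 = 0 := by
  simp [vvX, Pi.single_apply]

private lemma vvY_c0 (P : Pt) : (vvY P).1 0 = 0 := by
  simp [vvY, Pi.single_apply]

private lemma vvY_c1 (P : Pt) : (vvY P).1 1 = 1 := by
  simp [vvY, Pi.single_apply]

private lemma Xd_eq_fderiv (g : Pt → ℝ) (P : Pt) : Xd g P = fderiv ℝ g P (vvX P) := by
  unfold Xd pdx vvX
  rw [map_add, ContinuousLinearMap.map_smul, smul_eq_mul]

private lemma Yd_eq_fderiv (g : Pt → ℝ) (P : Pt) : Yd g P = fderiv ℝ g P (vvY P) := by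
  unfold Yd pdx vvY
  rw [map_sub, ContinuousLinearMap.map_smul, smul_eq_mul]

private lemma fderiv_div_apply' {f g : Pt → ℝ} {P : Pt} (hf : DifferentiableAt ℝ f P)
    (hg : DifferentiableAt ℝ g P) (hg0 : g P ≠ 0) (w : Pt) :
    fderiv ℝ (fun q => f q / g q) P w
      = (fderiv ℝ f P w * g P - f P * fderiv ℝ g P w) / g P ^ 2 := by
  have hinv : HasFDerivAt (fun q => (g q)⁻¹) ((-(g P ^ 2)⁻¹) • fderiv ℝ g P) P :=
    (hasDerivAt_inv hg0).comp_hasFDerivAt P hg.hasFDerivAt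
  have h : HasFDerivAt (fun q => f q / g q)
      (f P • ((-(g P ^ 2)⁻¹) • fderiv ℝ g P) + (g P)⁻¹ • fderiv ℝ f P) P := by
    simpa only [div_eq_mul_inv, Pi.mul_def] using hf.hasFDerivAt.mul hinv
  rw [h.fderiv]
  simp only [ContinuousLinearMap.add_apply, ContinuousLinearMap.smul_apply, smul_eq_mul]
  field_simp
  ring

private lemma alg (a b c d al be n t : ℝ) (hn : n ≠ 0) (h2 : n ^ 2 = al ^ 2 + be ^ 2)
    (ht : b - c = 4 * t) :
    a ^ 2 + b ^ 2 + c ^ 2 + d ^ 2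
      - ((a * (al / n) + c * (be / n)) ^ 2 + (b * (al / n) + d * (be / n)) ^ 2)
      = (al ^ 2 + be ^ 2) *
        ((((a + d) * n ^ 2 - (al ^ 2 * a + al * be * (c + b) + be ^ 2 * d)) / n ^ 3) ^ 2
          + (-(-4 * t) / n
             + ((a * (be / n) + b * (-al / n)) * (al / n)
                + (c * (be / n) + d * (-al / n)) * (be / n)) / n) ^ 2) := by
  have hs : al ^ 2 + be ^ 2 ≠ 0 := by rw [← h2]; exact pow_ne_zero 2 hn
  have e1 : (a * (al / n) + c * (be / n)) ^ 2 = (a * al + c * be) ^ 2 / (al ^ 2 + be ^ 2) := by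
    rw [← h2]; field_simp
  have e2 : (b * (al / n) + d * (be / n)) ^ 2 = (b * al + d * be) ^ 2 / (al ^ 2 + be ^ 2) := by
    rw [← h2]; field_simp
  have e3 : (((a + d) * n ^ 2 - (al ^ 2 * a + al * be * (c + b) + be ^ 2 * d)) / n ^ 3) ^ 2
      = ((a + d) * (al ^ 2 + be ^ 2) - (al ^ 2 * a + al * be * (c + b) + be ^ 2 * d)) ^ 2
        / (al ^ 2 + be ^ 2) ^ 3 := by
    rw [← h2, div_pow]; ring_nf
  have e4 : (-(-4 * t) / n
        + ((a * (be / n) + b * (-al / n)) * (al / n)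
           + (c * (be / n) + d * (-al / n)) * (be / n)) / n) ^ 2
      = ((b - c) * (al ^ 2 + be ^ 2) + (a * be - b * al) * al + (c * be - d * al) * be) ^ 2
        / (al ^ 2 + be ^ 2) ^ 3 := by
    rw [show -(-4 * t) / n = (4 * t) / n by ring, ← ht, ← h2]
    field_simp
    ring
  rw [e1, e2, e3, e4]
  field_simp
  ring

/-- **Lemma 4, first identity**: on the regular part of a level set,
`|Hu|² − ⟨(Hu)²ν,ν⟩ = |∇_ℍu|²(h² + (p + ⟨Hu v,ν⟩/|∇_ℍu|)²)`. -/
theorem hessian_curvature_identity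
    (u : Pt → ℝ) (P : Pt) (hy : 0 < P.2)
    (hreg : ∃ V : Set Pt, IsOpen V ∧ P ∈ V ∧ ContDiffOn ℝ 2 u V)
    (hnd : normH2 u P ≠ 0) :
    normHess2 u P - hessQ u P
      = normH2 u P * ((curvh u P) ^ 2 + (curvp u P + huvnu u P / nH u P) ^ 2) := by
  obtain ⟨V, hVo, hPV, huV⟩ := hreg
  have hC2 : ContDiffAt ℝ 2 u P := huV.contDiffAt (hVo.mem_nhds hPV)
  have hfd : ContDiffAt ℝ 1 (fderiv ℝ u) P := hC2.fderiv_right (by norm_num)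
  have hL : HasFDerivAt (fderiv ℝ u) (fderiv ℝ (fderiv ℝ u) P) P :=
    (hfd.differentiableAt one_ne_zero).hasFDerivAt
  have hsym : ∀ v w : Pt, fderiv ℝ (fderiv ℝ u) P v w = fderiv ℝ (fderiv ℝ u) P w v :=
    hC2.isSymmSndFDerivAt (by simp [minSmoothness_of_isRCLikeNormedField])
  -- derivatives of the first partials
  have hpdxH : ∀ i : Fin 3, HasFDerivAt (pdx i u)
      ((fderiv ℝ u P).comp (0 : Pt →L[ℝ] Pt)
        + (fderiv ℝ (fderiv ℝ u) P).flip ((Pi.single i 1 : Fin 3 → ℝ), (0:ℝ))) P :=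
    fun i => hL.clm_apply (hasFDerivAt_const _ P)
  have hco : ∀ j : Fin 3, HasFDerivAt (fun q : Pt => q.1 j)
      ((ContinuousLinearMap.proj j).comp (ContinuousLinearMap.fst ℝ (Fin 3 → ℝ) ℝ)) P :=
    fun j => ((ContinuousLinearMap.proj j).comp
      (ContinuousLinearMap.fst ℝ (Fin 3 → ℝ) ℝ)).hasFDerivAt
  -- derivative of Xd u and Yd u
  have hXdH : HasFDerivAt (Xd u) _ P :=
    (hpdxH 0).add (((hco 1).const_mul 2).mul (hpdxH 2))
  have hYdH : HasFDerivAt (Yd u) _ P :=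
    (hpdxH 1).sub (((hco 0).const_mul 2).mul (hpdxH 2))
  have dXd : DifferentiableAt ℝ (Xd u) P := hXdH.differentiableAt
  have dYd : DifferentiableAt ℝ (Yd u) P := hYdH.differentiableAt
  have vXd : ∀ w : Pt, fderiv ℝ (Xd u) P w
      = fderiv ℝ (fderiv ℝ u) P w (vvX P) + 2 * w.1 1 * pdx 2 u P := by
    intro w
    rw [hXdH.fderiv]
    simp only [ContinuousLinearMap.add_apply, ContinuousLinearMap.smul_apply,
      ContinuousLinearMap.coe_comp', Function.comp_apply, ContinuousLinearMap.zero_apply,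
      map_zero, ContinuousLinearMap.flip_apply, smul_eq_mul,
      ContinuousLinearMap.proj_apply, ContinuousLinearMap.coe_fst', zero_add, add_zero]
    unfold vvX
    rw [map_add, ContinuousLinearMap.map_smul, smul_eq_mul]
    unfold pdx
    ring
  have vYd : ∀ w : Pt, fderiv ℝ (Yd u) P w
      = fderiv ℝ (fderiv ℝ u) P w (vvY P) - 2 * w.1 0 * pdx 2 u P := by
    intro w
    rw [hYdH.fderiv]
    simp only [ContinuousLinearMap.sub_apply, ContinuousLinearMap.add_apply,
      ContinuousLinearMap.smul_apply, ContinuousLinearMap.coe_comp', Function.comp_apply,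
      ContinuousLinearMap.zero_apply, map_zero, ContinuousLinearMap.flip_apply, smul_eq_mul,
      ContinuousLinearMap.proj_apply, ContinuousLinearMap.coe_fst', zero_add, add_zero]
    unfold vvY
    rw [map_sub, ContinuousLinearMap.map_smul, smul_eq_mul]
    unfold pdx
    ring
  -- the commutator identity
  have hbc : Yd (Xd u) P - Xd (Yd u) P = 4 * pdx 2 u P := by
    rw [Yd_eq_fderiv (Xd u) P, Xd_eq_fderiv (Yd u) P, vXd (vvY P), vYd (vvX P),
      vvY_c1, vvX_c0, hsym (vvY P) (vvX P)]
    ring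
  -- positivity
  have h0 : (0:ℝ) ≤ normH2 u P := by unfold normH2; positivity
  have hnn : (0:ℝ) < normH2 u P := lt_of_le_of_ne h0 (Ne.symm hnd)
  have hnpos : (0:ℝ) < nH u P := Real.sqrt_pos.mpr hnn
  have hn0 : nH u P ≠ 0 := ne_of_gt hnpos
  have hn2 : nH u P ^ 2 = Xd u P ^ 2 + Yd u P ^ 2 := by
    have := Real.sq_sqrt h0
    simpa [nH, normH2] using this
  -- derivative of normH2 and nH
  have hnrmH : HasFDerivAt (normH2 u)
      ((Xd u P • fderiv ℝ (Xd u) P + Xd u P • fderiv ℝ (Xd u) P)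
        + (Yd u P • fderiv ℝ (Yd u) P + Yd u P • fderiv ℝ (Yd u) P)) P := by
    have h := (dXd.hasFDerivAt.mul dXd.hasFDerivAt).add (dYd.hasFDerivAt.mul dYd.hasFDerivAt)
    have he : normH2 u = fun p => Xd u p * Xd u p + Yd u p * Yd u p := by
      funext p; unfold normH2; ring
    rw [he]
    exact h
  have hnHH : HasFDerivAt (nH u) _ P := hnrmH.sqrt hnd
  have dnH : DifferentiableAt ℝ (nH u) P := hnHH.differentiableAt
  have vnH : ∀ w : Pt, fderiv ℝ (nH u) P w
      = (Xd u P * fderiv ℝ (Xd u) P w + Yd u P * fderiv ℝ (Yd u) P w) / nH u P := by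
    intro w
    rw [hnHH.fderiv]
    simp only [ContinuousLinearMap.smul_apply, ContinuousLinearMap.add_apply, smul_eq_mul]
    rw [show Real.sqrt (normH2 u P) = nH u P from rfl]
    field_simp
    ring
  -- second-derivative rewrites
  have fXX : fderiv ℝ (Xd u) P (vvX P) = Xd (Xd u) P := (Xd_eq_fderiv (Xd u) P).symm
  have fYY : fderiv ℝ (Yd u) P (vvY P) = Yd (Yd u) P := (Yd_eq_fderiv (Yd u) P).symm
  have fXY : fderiv ℝ (Yd u) P (vvX P) = Xd (Yd u) P := (Xd_eq_fderiv (Yd u) P).symm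
  have fYX : fderiv ℝ (Xd u) P (vvY P) = Yd (Xd u) P := (Yd_eq_fderiv (Xd u) P).symm
  -- the mean-curvature formula
  have hcurvh : curvh u P
      = ((Xd (Xd u) P + Yd (Yd u) P) * nH u P ^ 2
          - (Xd u P ^ 2 * Xd (Xd u) P
             + Xd u P * Yd u P * (Xd (Yd u) P + Yd (Xd u) P)
             + Yd u P ^ 2 * Yd (Yd u) P)) / nH u P ^ 3 := by
    unfold curvh
    rw [Xd_eq_fderiv _ P, Yd_eq_fderiv _ P,
      fderiv_div_apply' dXd dnH hn0, fderiv_div_apply' dYd dnH hn0,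
      vnH, vnH, fXX, fYY, fXY, fYX]
    field_simp
    ring
  -- final algebraic identity
  unfold normHess2 hessQ huvnu curvp Td nu1 nu2 tv1 tv2 normH2
  rw [hcurvh]
  exact alg (Xd (Xd u) P) (Yd (Xd u) P) (Xd (Yd u) P) (Yd (Yd u) P)
    (Xd u P) (Yd u P) (nH u P) (pdx 2 u P) hn0 hn2 hbc
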